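/- arXiv:2506.08747 — 2 statements merged into one kernel-verified Lean document; each statement's English description precedes it below -/
import Mathlib

section
/- Let G be an m×p real matrix with m ≥ p, let S be an m×m symmetric positive definite matrix, and let A be an m×m symmetric positive semidefinite matrix such that GᵀAG is invertible. Then the matrix (GᵀAG)⁻¹ GᵀA S A G (GᵀAG)⁻¹ - (Gᵀ S⁻¹ G)⁻¹ is positive semidefinite, provided Gᵀ S⁻¹ G is invertible. -/
open Matrix

private lemma gmm_aux {m p : ℕ}
    (G : Matrix (Fin m) (Fin p) ℝ) (S : Matrix (Fin m) (Fin m) ℝ) (hS : S.PosDef)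
    (B : Matrix (Fin p) (Fin m) ℝ) (C : Matrix (Fin p) (Fin p) ℝ)
    (hSsym : Sᵀ = S) (hSinv_sym : S⁻¹ᵀ = S⁻¹)
    (hSS : S * S⁻¹ = 1) (hSS' : S⁻¹ * S = 1)
    (hBG : B * G = 1) (hCsym : Cᵀ = C)
    (hCMC : C * (Gᵀ * S⁻¹ * G) * C = C) :
    (B * S * Bᵀ - C).PosSemidef := by
  have hGB : Gᵀ * Bᵀ = 1 := by
    have := congrArg Matrix.transpose hBG
    simpa using this
  have hHT : (B - C * Gᵀ * S⁻¹)ᵀ = Bᵀ - S⁻¹ * G * C := by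
    rw [Matrix.transpose_sub]
    congr 1
    rw [Matrix.transpose_mul, Matrix.transpose_mul, hSinv_sym, hCsym,
      Matrix.transpose_transpose, Matrix.mul_assoc]
  have key : B * S * Bᵀ - C = (B - C * Gᵀ * S⁻¹) * S * (B - C * Gᵀ * S⁻¹)ᵀ := by
    rw [hHT]
    simp only [Matrix.sub_mul, Matrix.mul_sub]
    have t2 : B * S * (S⁻¹ * G * C) = C := by
      rw [show B * S * (S⁻¹ * G * C) = B * (S * S⁻¹) * G * C by
        simp only [Matrix.mul_assoc], hSS, Matrix.mul_one, hBG, Matrix.one_mul]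
    have t3 : C * Gᵀ * S⁻¹ * S * Bᵀ = C := by
      rw [show C * Gᵀ * S⁻¹ * S * Bᵀ = C * (Gᵀ * ((S⁻¹ * S) * Bᵀ)) by
        simp only [Matrix.mul_assoc], hSS', Matrix.one_mul, hGB, Matrix.mul_one]
    have t4 : C * Gᵀ * S⁻¹ * S * (S⁻¹ * G * C) = C := by
      rw [show C * Gᵀ * S⁻¹ * S * (S⁻¹ * G * C) = C * (Gᵀ * ((S⁻¹ * S) * S⁻¹) * G) * C by
        simp only [Matrix.mul_assoc], hSS', Matrix.one_mul]
      rw [show C * (Gᵀ * S⁻¹ * G) * C = C from hCMC]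
    rw [t2, t3, t4]
    abel
  rw [key]
  have h := (hS.posSemidef).mul_mul_conjTranspose_same (B - C * Gᵀ * S⁻¹)
  rwa [Matrix.conjTranspose_eq_transpose_of_trivial] at h

theorem stmt_4 {m p : ℕ} (hmp : p ≤ m)
    (G : Matrix (Fin m) (Fin p) ℝ) (S : Matrix (Fin m) (Fin m) ℝ) (hS : S.PosDef)
    (A : Matrix (Fin m) (Fin m) ℝ) (hA : A.PosSemidef)
    (h1 : IsUnit (Gᵀ * A * G)) (h2 : IsUnit (Gᵀ * S⁻¹ * G)) :
    ((Gᵀ * A * G)⁻¹ * Gᵀ * A * S * A * G * (Gᵀ * A * G)⁻¹ - (Gᵀ * S⁻¹ * G)⁻¹).PosSemidef := by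
  have hAsym : Aᵀ = A := by
    have := hA.1.eq
    rwa [Matrix.conjTranspose_eq_transpose_of_trivial] at this
  have hSsym : Sᵀ = S := by
    have := hS.1.eq
    rwa [Matrix.conjTranspose_eq_transpose_of_trivial] at this
  have hSinv_sym : S⁻¹ᵀ = S⁻¹ := by
    rw [Matrix.transpose_nonsing_inv, hSsym]
  have hSdet : IsUnit S.det := isUnit_iff_ne_zero.mpr hS.det_pos.ne'
  have hSS : S * S⁻¹ = 1 := Matrix.mul_nonsing_inv S hSdet
  have hSS' : S⁻¹ * S = 1 := Matrix.nonsing_inv_mul S hSdet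
  have h1d : IsUnit (Gᵀ * A * G).det := (Matrix.isUnit_iff_isUnit_det _).mp h1
  have h2d : IsUnit (Gᵀ * S⁻¹ * G).det := (Matrix.isUnit_iff_isUnit_det _).mp h2
  have hBG : ((Gᵀ * A * G)⁻¹ * Gᵀ * A) * G = 1 := by
    rw [Matrix.mul_assoc, Matrix.mul_assoc, ← Matrix.mul_assoc Gᵀ A G,
      Matrix.nonsing_inv_mul _ h1d]
  have hCsym : ((Gᵀ * S⁻¹ * G)⁻¹)ᵀ = (Gᵀ * S⁻¹ * G)⁻¹ := by
    rw [Matrix.transpose_nonsing_inv]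
    congr 1
    rw [Matrix.transpose_mul, Matrix.transpose_mul, hSinv_sym, Matrix.transpose_transpose,
      Matrix.mul_assoc]
  have hCMC : (Gᵀ * S⁻¹ * G)⁻¹ * (Gᵀ * S⁻¹ * G) * (Gᵀ * S⁻¹ * G)⁻¹ = (Gᵀ * S⁻¹ * G)⁻¹ := by
    rw [Matrix.nonsing_inv_mul _ h2d, Matrix.one_mul]
  have main := gmm_aux G S hS ((Gᵀ * A * G)⁻¹ * Gᵀ * A) ((Gᵀ * S⁻¹ * G)⁻¹)
    hSsym hSinv_sym hSS hSS' hBG hCsym hCMC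
  have hsym : (Gᵀ * A * G)ᵀ = Gᵀ * A * G := by
    rw [Matrix.transpose_mul, Matrix.transpose_mul, hAsym, Matrix.transpose_transpose,
      Matrix.mul_assoc]
  have hBT : ((Gᵀ * A * G)⁻¹ * Gᵀ * A)ᵀ = A * G * (Gᵀ * A * G)⁻¹ := by
    rw [Matrix.transpose_mul, Matrix.transpose_mul, hAsym, Matrix.transpose_transpose,
      Matrix.transpose_nonsing_inv, hsym]
    simp only [Matrix.mul_assoc]
  rw [hBT] at main
  have hexpr : (Gᵀ * A * G)⁻¹ * Gᵀ * A * S * A * G * (Gᵀ * A * G)⁻¹ =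
      ((Gᵀ * A * G)⁻¹ * Gᵀ * A) * S * (A * G * (Gᵀ * A * G)⁻¹) := by
    simp only [Matrix.mul_assoc]
  rw [hexpr]
  exact main
end

section
/- Let G be an m×p real matrix, S = CCᵀ with C invertible, and A an m×m matrix such that GᵀAG and GᵀS⁻¹G are invertible. Define H = (GᵀAG)⁻¹GᵀAC - (GᵀS⁻¹G)⁻¹GᵀC⁻ᵀ. Then (GᵀAG)⁻¹ GᵀA S A G (GᵀAG)⁻¹ = H Hᵀ + (GᵀS⁻¹G)⁻¹, assuming additionally that A is symmetric. -/
open Matrix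

theorem stmt_6 {m p : ℕ}
    (G : Matrix (Fin m) (Fin p) ℝ) (S C : Matrix (Fin m) (Fin m) ℝ)
    (hC : IsUnit C) (hfac : S = C * Cᵀ)
    (A : Matrix (Fin m) (Fin m) ℝ) (hAsymm : Aᵀ = A)
    (h1 : IsUnit (Gᵀ * A * G)) (h2 : IsUnit (Gᵀ * S⁻¹ * G))
    (H : Matrix (Fin p) (Fin m) ℝ)
    (hH : H = (Gᵀ * A * G)⁻¹ * Gᵀ * A * C - (Gᵀ * S⁻¹ * G)⁻¹ * Gᵀ * (C⁻¹)ᵀ) :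
    (Gᵀ * A * G)⁻¹ * Gᵀ * A * S * A * G * (Gᵀ * A * G)⁻¹ = H * Hᵀ + (Gᵀ * S⁻¹ * G)⁻¹ := by
  have hCd : IsUnit C.det := (Matrix.isUnit_iff_isUnit_det C).mp hC
  have hCtd : IsUnit Cᵀ.det := by simpa [Matrix.det_transpose] using hCd
  have hSd : IsUnit S.det := by
    rw [hfac, Matrix.det_mul]; exact hCd.mul hCtd
  have h1d : IsUnit (Gᵀ * A * G).det := (Matrix.isUnit_iff_isUnit_det _).mp h1
  have h2d : IsUnit (Gᵀ * S⁻¹ * G).det := (Matrix.isUnit_iff_isUnit_det _).mp h2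
  have hSinv : S⁻¹ = (C⁻¹)ᵀ * C⁻¹ := by
    rw [hfac, Matrix.mul_inv_rev, Matrix.transpose_nonsing_inv]
  have hSsymm : Sᵀ = S := by rw [hfac]; simp [Matrix.transpose_mul]
  have hSinvT : (S⁻¹)ᵀ = S⁻¹ := by rw [Matrix.transpose_nonsing_inv, hSsymm]
  set P : Matrix (Fin p) (Fin m) ℝ := (Gᵀ * A * G)⁻¹ * Gᵀ * A with hP
  set Q : Matrix (Fin p) (Fin m) ℝ := (Gᵀ * S⁻¹ * G)⁻¹ * Gᵀ * S⁻¹ with hQ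
  set B2 : Matrix (Fin p) (Fin p) ℝ := (Gᵀ * S⁻¹ * G)⁻¹ with hB2
  have hKt : (Gᵀ * A * G)ᵀ = Gᵀ * A * G := by
    simp [Matrix.transpose_mul, hAsymm, Matrix.mul_assoc]
  have hLt : (Gᵀ * S⁻¹ * G)ᵀ = Gᵀ * S⁻¹ * G := by
    simp [Matrix.transpose_mul, hSinvT, Matrix.mul_assoc]
  have hB1t : ((Gᵀ * A * G)⁻¹)ᵀ = (Gᵀ * A * G)⁻¹ := by
    rw [Matrix.transpose_nonsing_inv, hKt]
  have hB2t : B2ᵀ = B2 := by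
    rw [hB2, Matrix.transpose_nonsing_inv, hLt]
  have hPt : Pᵀ = A * G * (Gᵀ * A * G)⁻¹ := by
    rw [hP, Matrix.transpose_mul, Matrix.transpose_mul, hB1t, hAsymm,
      Matrix.transpose_transpose]
    simp only [Matrix.mul_assoc]
  have hQt : Qᵀ = S⁻¹ * G * B2 := by
    rw [hQ, Matrix.transpose_mul, Matrix.transpose_mul, hB2t, hSinvT,
      Matrix.transpose_transpose]
    simp only [Matrix.mul_assoc]
  have hPG : P * G = 1 := by
    rw [hP]
    calc (Gᵀ * A * G)⁻¹ * Gᵀ * A * G = (Gᵀ * A * G)⁻¹ * (Gᵀ * A * G) := by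
          simp only [Matrix.mul_assoc]
      _ = 1 := Matrix.nonsing_inv_mul _ h1d
  have hQG : Q * G = 1 := by
    rw [hQ]
    calc (Gᵀ * S⁻¹ * G)⁻¹ * Gᵀ * S⁻¹ * G = (Gᵀ * S⁻¹ * G)⁻¹ * (Gᵀ * S⁻¹ * G) := by
          simp only [Matrix.mul_assoc]
      _ = 1 := Matrix.nonsing_inv_mul _ h2d
  have hQS : Q * S = B2 * Gᵀ := by
    rw [hQ, Matrix.mul_assoc, Matrix.mul_assoc, Matrix.nonsing_inv_mul S hSd,
      Matrix.mul_one, hB2]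
  have hQSQ : Q * S * Qᵀ = B2 := by
    calc Q * S * Qᵀ = B2 * (Gᵀ * S⁻¹ * G) * B2 := by
          rw [hQS, hQt]; simp only [Matrix.mul_assoc]
      _ = B2 := by rw [hB2, Matrix.nonsing_inv_mul _ h2d, Matrix.one_mul]
  have hQSP : Q * S * Pᵀ = B2 := by
    calc Q * S * Pᵀ = B2 * (Gᵀ * A * G) * (Gᵀ * A * G)⁻¹ := by
          rw [hQS, hPt]; simp only [Matrix.mul_assoc]
      _ = B2 := Matrix.mul_nonsing_inv_cancel_right _ _ h1d
  have hPSQ : P * S * Qᵀ = B2 := by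
    calc P * S * Qᵀ = P * S * S⁻¹ * G * B2 := by
          rw [hQt]; simp only [Matrix.mul_assoc]
      _ = P * G * B2 := by rw [Matrix.mul_nonsing_inv_cancel_right _ _ hSd]
      _ = B2 := by rw [hPG, Matrix.one_mul]
  have hQC : Q * C = B2 * Gᵀ * (C⁻¹)ᵀ := by
    rw [hQ, hSinv, hB2]
    calc (Gᵀ * S⁻¹ * G)⁻¹ * Gᵀ * ((C⁻¹)ᵀ * C⁻¹) * C
        = (Gᵀ * S⁻¹ * G)⁻¹ * Gᵀ * (C⁻¹)ᵀ * (C⁻¹ * C) := by simp only [Matrix.mul_assoc]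
      _ = (Gᵀ * S⁻¹ * G)⁻¹ * Gᵀ * (C⁻¹)ᵀ := by
          rw [Matrix.nonsing_inv_mul C hCd, Matrix.mul_one]
  have hHPQ : H = (P - Q) * C := by
    rw [hH, Matrix.sub_mul, hQC, hP]
  have hLHS : (Gᵀ * A * G)⁻¹ * Gᵀ * A * S * A * G * (Gᵀ * A * G)⁻¹ = P * S * Pᵀ := by
    rw [hP, hPt]; simp only [Matrix.mul_assoc]
  rw [hLHS, hHPQ]
  have hexp : (P - Q) * C * ((P - Q) * C)ᵀ = (P - Q) * S * (P - Q)ᵀ := by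
    calc (P - Q) * C * ((P - Q) * C)ᵀ = (P - Q) * (C * Cᵀ) * (P - Q)ᵀ := by
          rw [Matrix.transpose_mul]; simp only [Matrix.mul_assoc]
      _ = (P - Q) * S * (P - Q)ᵀ := by rw [← hfac]
  rw [hexp, Matrix.transpose_sub]
  simp only [Matrix.sub_mul, Matrix.mul_sub]
  rw [hQSQ, hQSP, hPSQ]
  abel
end
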